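/- Let Σ be a finite complete simplicial fan in N, σ ∈ Σ with dim σ ≥ 2, and x a primitive element of N in the relative interior of σ. Then for every primitive collection P* of the star subdivision Σ*_{(σ,x)} with x ∈ P*, there exists a primitive collection P ∈ PC(Σ) such that (P ∖ G(σ)) ∪ {x} = P*. -/

import Mathlib

noncomputable section

open Finset

/-- The real vector space `N_ℝ` for the lattice `N = ℤ^d`. -/
abbrev NR (d : ℕ) := Fin d → ℝ

/-- The canonical map from the lattice `N = ℤ^d` to `N_ℝ`. -/
def toNR {d : ℕ} (x : Fin d → ℤ) : NR d := fun i => (x i : ℝ)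

/-- The convex cone generated by a set: all finite nonnegative real combinations. -/
def coneOf {d : ℕ} (S : Set (NR d)) : Set (NR d) :=
  { y | ∃ (n : ℕ) (c : Fin n → ℝ) (v : Fin n → NR d),
      (∀ i, 0 ≤ c i) ∧ (∀ i, v i ∈ S) ∧ y = ∑ i, c i • v i }

/-- `τ` is a face of the cone `σ`, cut out by a linear functional nonnegative on `σ`. -/
def IsFaceOf {d : ℕ} (τ σ : Set (NR d)) : Prop :=
  ∃ u : NR d →ₗ[ℝ] ℝ, (∀ x ∈ σ, 0 ≤ u x) ∧ τ = {x ∈ σ | u x = 0}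

/-- A rational polyhedral cone: generated by finitely many lattice points. -/
def IsRationalPolyhedralCone {d : ℕ} (σ : Set (NR d)) : Prop :=
  ∃ S : Finset (Fin d → ℤ), σ = coneOf (toNR '' (↑S : Set (Fin d → ℤ)))

/-- A pointed (strongly convex) cone. -/
def IsPointedCone {d : ℕ} (σ : Set (NR d)) : Prop :=
  ∀ x ∈ σ, -x ∈ σ → x = 0

/-- A primitive lattice vector. -/
def IsPrimitive {d : ℕ} (x : Fin d → ℤ) : Prop :=
  x ≠ 0 ∧ ∀ (k : ℤ) (y : Fin d → ℤ), x = k • y → k = 1 ∨ k = -1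

/-- The dimension of a cone. -/
def coneDim {d : ℕ} (σ : Set (NR d)) : ℕ :=
  Module.finrank ℝ ↥(Submodule.span ℝ σ)

/-- A (finite) fan in `N = ℤ^d`: a finite collection of rational pointed polyhedral
cones, closed under taking faces, such that the intersection of any two cones is a
face of each. -/
structure Fan (d : ℕ) where
  cones : Set (Set (NR d))
  finite : cones.Finite
  rational : ∀ σ ∈ cones, IsRationalPolyhedralCone σ
  pointed : ∀ σ ∈ cones, IsPointedCone σ
  face_mem : ∀ σ ∈ cones, ∀ τ : Set (NR d), IsFaceOf τ σ → τ ∈ cones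
  inter_face : ∀ σ ∈ cones, ∀ τ ∈ cones, IsFaceOf (σ ∩ τ) σ

namespace Fan

variable {d : ℕ}

/-- A complete fan. -/
def IsComplete (F : Fan d) : Prop := ⋃₀ F.cones = Set.univ

/-- A simplicial fan: every cone is generated by linearly independent vectors. -/
def IsSimplicial (F : Fan d) : Prop :=
  ∀ σ ∈ F.cones, ∃ S : Finset (Fin d → ℤ),
    LinearIndependent ℝ (fun v : ↥(toNR '' (↑S : Set (Fin d → ℤ))) => (v : NR d)) ∧
    σ = coneOf (toNR '' (↑S : Set (Fin d → ℤ)))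

/-- A nonsingular fan: every cone is generated by part of a `ℤ`-basis of `N`. -/
def IsNonsingular (F : Fan d) : Prop :=
  ∀ σ ∈ F.cones, ∃ (b : Module.Basis (Fin d) ℤ (Fin d → ℤ)) (t : Set (Fin d)),
    σ = coneOf (toNR '' (⇑b '' t))

/-- `G(Σ)`: the set of primitive generators of the rays of a fan. -/
def genSet (F : Fan d) : Set (Fin d → ℤ) :=
  { x | IsPrimitive x ∧ coneOf {toNR x} ∈ F.cones }

/-- `G(σ) = σ ∩ G(Σ)`. -/
def coneGens (F : Fan d) (σ : Set (NR d)) : Set (Fin d → ℤ) :=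
  { x ∈ F.genSet | toNR x ∈ σ }

/-- A primitive collection of a fan. -/
def IsPrimitiveCollection (F : Fan d) (P : Finset (Fin d → ℤ)) : Prop :=
  P.Nonempty ∧ (↑P : Set (Fin d → ℤ)) ⊆ F.genSet ∧
    coneOf (toNR '' (↑P : Set (Fin d → ℤ))) ∉ F.cones ∧
    ∀ x ∈ P, coneOf (toNR '' ((↑P : Set (Fin d → ℤ)) \ {x})) ∈ F.cones

/-- `IsPrimRel F P Y a`: `P` is a primitive collection of `F` whose primitive relation is
`∑_{x ∈ P} x = ∑_{y ∈ Y} (a y) • y`, where `Y = G(σ(P))` and `σ(P)` is the unique cone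
whose relative interior contains `∑_{x ∈ P} x`, and the coefficients `a y` are positive. -/
def IsPrimRel (F : Fan d) (P Y : Finset (Fin d → ℤ)) (a : (Fin d → ℤ) → ℤ) : Prop :=
  F.IsPrimitiveCollection P ∧
  ∃ σ ∈ F.cones, (↑Y : Set (Fin d → ℤ)) = F.coneGens σ ∧
    toNR (∑ x ∈ P, x) ∈ intrinsicInterior ℝ σ ∧
    (∀ y ∈ Y, 0 < a y) ∧ (∑ x ∈ P, x) = ∑ y ∈ Y, a y • y

/-- A Fano fan: a finite complete nonsingular fan with `deg P > 0` for every
primitive collection `P` (so its toric variety is a nonsingular toric Fano `d`-fold). -/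
def IsFanoFan (F : Fan d) : Prop :=
  F.IsComplete ∧ F.IsNonsingular ∧
    ∀ P Y a, F.IsPrimRel P Y a → ∑ y ∈ Y, a y < (P.card : ℤ)

/-- The collection of cones of the star subdivision of `F` along `(σ, x)`. -/
def starSub (F : Fan d) (σ : Set (NR d)) (x : Fin d → ℤ) : Set (Set (NR d)) :=
  { τ ∈ F.cones | ¬ IsFaceOf σ τ } ∪
  { ρ | ∃ τ ∈ F.cones, IsFaceOf σ τ ∧ ∃ xi ∈ F.coneGens σ,
      IsFaceOf ρ (coneOf (toNR ''
        (insert x ((F.coneGens τ \ F.coneGens σ) ∪ (F.coneGens σ \ {xi}))))) }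

/-- `F'` is the star subdivision of `F` along `(σ, x)`. -/
def IsStarSubdivisionOf (F' F : Fan d) (σ : Set (NR d)) (x : Fin d → ℤ) : Prop :=
  F'.cones = F.starSub σ x

/-- `F'` is an equivariant blow-up of `F`: the star subdivision along a cone `σ` (with at
least two generators) and the sum of the elements of `G(σ)`. -/
def IsBlowupOf (F' F : Fan d) : Prop :=
  ∃ σ ∈ F.cones, ∃ S : Finset (Fin d → ℤ),
    (↑S : Set (Fin d → ℤ)) = F.coneGens σ ∧ 2 ≤ S.card ∧
    F'.IsStarSubdivisionOf F σ (∑ y ∈ S, y)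

/-- One step of F-equivalence: an equivariant blow-up or blow-down between Fano fans. -/
def FStep (F G : Fan d) : Prop :=
  F.IsFanoFan ∧ G.IsFanoFan ∧ (G.IsBlowupOf F ∨ F.IsBlowupOf G)

/-- F-equivalence of Fano fans. -/
def FEquiv : Fan d → Fan d → Prop := Relation.ReflTransGen FStep

/-- A splitting fan: any two distinct primitive collections are disjoint. -/
def IsSplittingFan (F : Fan d) : Prop :=
  F.IsComplete ∧ F.IsNonsingular ∧
    ∀ P Q, F.IsPrimitiveCollection P → F.IsPrimitiveCollection Q → P ≠ Q →
      ∀ x ∈ P, x ∉ Q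

/-- Data of a wall relation: `τ` is a wall (a `(d-1)`-dimensional cone) with
`G(τ) = Z`, `z_d = zd`, `z_{d+1} = zd1` the generators of the two maximal cones
containing `τ`, and `∑_{z ∈ Z} (b z) • z + zd + zd1 = 0`.  The anticanonical degree of
the corresponding invariant curve is `∑_{z ∈ Z} b z + 2`. -/
def IsWallRel (F : Fan d) (τ : Set (NR d)) (Z : Finset (Fin d → ℤ))
    (zd zd1 : Fin d → ℤ) (b : (Fin d → ℤ) → ℤ) : Prop :=
  τ ∈ F.cones ∧ coneDim τ = d - 1 ∧ (↑Z : Set (Fin d → ℤ)) = F.coneGens τ ∧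
    zd ∈ F.genSet ∧ zd1 ∈ F.genSet ∧ zd ≠ zd1 ∧ zd ∉ Z ∧ zd1 ∉ Z ∧
    coneOf (toNR '' (insert zd (↑Z : Set (Fin d → ℤ)))) ∈ F.cones ∧
    coneOf (toNR '' (insert zd1 (↑Z : Set (Fin d → ℤ)))) ∈ F.cones ∧
    (∑ z ∈ Z, b z • z) + zd + zd1 = 0

end Fan

/-- The fan of a product of projective spaces `P^{a 0} × ⋯ × P^{a (r-1)}`. -/
def IsProdProjFan {d r : ℕ} (F : Fan d) (a : Fin r → ℕ) : Prop :=
  ∃ e : (j : Fin r) → Fin (a j + 1) → (Fin d → ℤ),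
    (∀ j, ∑ i, e j i = 0) ∧
    (∃ b : Module.Basis ((j : Fin r) × Fin (a j)) ℤ (Fin d → ℤ),
       ∀ (j : Fin r) (i : Fin (a j)), e j i.castSucc = b ⟨j, i⟩) ∧
    F.cones = { σ | ∃ s : (j : Fin r) → Finset (Fin (a j + 1)),
        (∀ j, s j ≠ Finset.univ) ∧
        σ = coneOf (toNR '' (⋃ j, (e j) '' (↑(s j) : Set (Fin (a j + 1))))) }

/-- The fan of the projective space `P^d`. -/
def IsProjFan {d : ℕ} (F : Fan d) : Prop := IsProdProjFan F (fun _ : Fin 1 => d)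

/-- The lattice points of `N_ℝ`. -/
def latticePts (d : ℕ) : Set (NR d) := Set.range (toNR (d := d))

/-- `F` is, up to a unimodular identification, the product of the fans `F₁` and `F₂`. -/
def IsProductOf {d d₁ d₂ : ℕ} (F : Fan d) (F₁ : Fan d₁) (F₂ : Fan d₂) : Prop :=
  ∃ φ : NR d ≃ₗ[ℝ] NR d₁ × NR d₂,
    (⇑φ '' latticePts d = (latticePts d₁) ×ˢ (latticePts d₂)) ∧
    F.cones = { σ | ∃ σ₁ ∈ F₁.cones, ∃ σ₂ ∈ F₂.cones, ⇑φ '' σ = σ₁ ×ˢ σ₂ }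

/-- `δ` is a nonempty proper face of the polytope `Δ`. -/
def IsProperPolytopeFace {d : ℕ} (δ Δ : Set (NR d)) : Prop :=
  δ.Nonempty ∧ δ ≠ Δ ∧ ∃ (u : NR d →ₗ[ℝ] ℝ) (c : ℝ),
    (∀ x ∈ Δ, u x ≤ c) ∧ δ = {x ∈ Δ | u x = c}

/-- The collection of cones over the proper faces of the polytope `Conv(V)`
(together with the zero cone). -/
def polytopeFaceFan {d : ℕ} (V : Set (NR d)) : Set (Set (NR d)) :=
  insert ({0} : Set (NR d))
    { σ | ∃ δ : Set (NR d), IsProperPolytopeFace δ (convexHull ℝ V) ∧ σ = coneOf δ }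

/-- The four-dimensional del Pezzo fan `V⁴` (up to unimodular equivalence). -/
def IsDelPezzoFan4 (F : Fan 4) : Prop :=
  ∃ b : Module.Basis (Fin 4) ℤ (Fin 4 → ℤ),
    F.cones = polytopeFaceFan (toNR ''
      ((Set.range ⇑b) ∪ (Set.range fun i => -b i) ∪ {(∑ i, b i), -(∑ i, b i)}))

/-- The four-dimensional pseudo del Pezzo fan `Ṽ⁴` (up to unimodular equivalence). -/
def IsPseudoDelPezzoFan4 (F : Fan 4) : Prop :=
  ∃ b : Module.Basis (Fin 4) ℤ (Fin 4 → ℤ),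
    F.cones = polytopeFaceFan (toNR ''
      ((Set.range ⇑b) ∪ (Set.range fun i => -b i) ∪ {∑ i, b i}))

/-- An equivariant blow-up of a 3-dimensional fan at an invariant point: star subdivision
along a 3-dimensional cone and the sum of its three generators. -/
def PointBlowup3 (F' F : Fan 3) : Prop :=
  ∃ σ ∈ F.cones, ∃ S : Finset (Fin 3 → ℤ),
    (↑S : Set (Fin 3 → ℤ)) = F.coneGens σ ∧ S.card = 3 ∧
    F'.IsStarSubdivisionOf F σ (∑ y ∈ S, y)

/-- An equivariant blow-up of a 3-dimensional fan along an invariant curve: star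
subdivision along a 2-dimensional cone and the sum of its two generators. -/
def CurveBlowup3 (F' F : Fan 3) : Prop :=
  ∃ σ ∈ F.cones, ∃ S : Finset (Fin 3 → ℤ),
    (↑S : Set (Fin 3 → ℤ)) = F.coneGens σ ∧ S.card = 2 ∧
    F'.IsStarSubdivisionOf F σ (∑ y ∈ S, y)

section Lemmas
variable {d : ℕ}

lemma toNR_inj : Function.Injective (toNR (d := d)) := by
  intro a b h
  funext i
  have := congrFun h i
  simpa [toNR] using this

lemma toNR_eq_zero {v : Fin d → ℤ} : toNR v = 0 ↔ v = 0 := by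
  constructor
  · intro h; funext i; have := congrFun h i; simpa [toNR] using this
  · rintro rfl; funext i; simp [toNR]

lemma toNR_zsmul (k : ℤ) (v : Fin d → ℤ) : toNR (k • v) = (k : ℝ) • toNR v := by
  funext i; simp [toNR]

lemma zero_mem_coneOf (S : Set (NR d)) : (0 : NR d) ∈ coneOf S :=
  ⟨0, ![], ![], by simp, by simp, by simp⟩

lemma subset_coneOf (S : Set (NR d)) : S ⊆ coneOf S := by
  intro y hy
  exact ⟨1, fun _ => 1, fun _ => y, by simp, by simp [hy], by simp⟩

lemma coneOf_mono {S T : Set (NR d)} (h : S ⊆ T) : coneOf S ⊆ coneOf T := by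
  rintro y ⟨n, c, v, hc, hv, rfl⟩
  exact ⟨n, c, v, hc, fun i => h (hv i), rfl⟩

lemma smul_mem_coneOf {S : Set (NR d)} {y : NR d} {c : ℝ} (hc : 0 ≤ c)
    (hy : y ∈ coneOf S) : c • y ∈ coneOf S := by
  obtain ⟨n, a, v, ha, hv, rfl⟩ := hy
  refine ⟨n, fun i => c * a i, v, fun i => mul_nonneg hc (ha i), hv, ?_⟩
  rw [Finset.smul_sum]
  exact Finset.sum_congr rfl fun i _ => by rw [smul_smul]

lemma add_mem_coneOf {S : Set (NR d)} {y z : NR d}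
    (hy : y ∈ coneOf S) (hz : z ∈ coneOf S) : y + z ∈ coneOf S := by
  obtain ⟨n, a, v, ha, hv, rfl⟩ := hy
  obtain ⟨m, b, w, hb, hw, rfl⟩ := hz
  refine ⟨n + m, Fin.append a b, Fin.append v w, ?_, ?_, ?_⟩
  · intro i
    induction i using Fin.addCases with
    | left i => simpa using ha i
    | right i => simpa using hb i
  · intro i
    induction i using Fin.addCases with
    | left i => simpa using hv i
    | right i => simpa using hw i
  · rw [Fin.sum_univ_add]
    simp

lemma sum_mem_coneOf {S : Set (NR d)} {ι : Type*} {A : Finset ι} {f : ι → NR d}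
    (hf : ∀ i ∈ A, f i ∈ coneOf S) : ∑ i ∈ A, f i ∈ coneOf S := by
  classical
  induction A using Finset.induction with
  | empty => simpa using zero_mem_coneOf S
  | insert _ _ hnotmem ih =>
    rw [Finset.sum_insert hnotmem]
    exact add_mem_coneOf (hf _ (Finset.mem_insert_self _ _))
      (ih fun i hi => hf i (Finset.mem_insert_of_mem hi))

lemma coneOf_subset {S : Set (NR d)} {T : Set (NR d)} (h : T ⊆ coneOf S) :
    coneOf T ⊆ coneOf S := by
  rintro y ⟨n, c, v, hc, hv, rfl⟩
  exact sum_mem_coneOf fun i _ => smul_mem_coneOf (hc i) (h (hv i))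

lemma finsetSum_mem_coneOf {ι : Type*} {A : Finset ι} {g : ι → NR d} {c : ι → ℝ}
    {S : Set (NR d)} (hc : ∀ i ∈ A, 0 ≤ c i) (hg : ∀ i ∈ A, g i ∈ S) :
    ∑ i ∈ A, c i • g i ∈ coneOf S :=
  sum_mem_coneOf fun i hi => smul_mem_coneOf (hc i hi) (subset_coneOf S (hg i hi))

lemma mem_coneOf_singleton {w y : NR d} : y ∈ coneOf {w} ↔ ∃ c : ℝ, 0 ≤ c ∧ y = c • w := by
  constructor
  · rintro ⟨n, c, v, hc, hv, rfl⟩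
    refine ⟨∑ i, c i, Finset.sum_nonneg fun i _ => hc i, ?_⟩
    rw [Finset.sum_smul]
    exact Finset.sum_congr rfl fun i _ => by rw [hv i]
  · rintro ⟨c, hc, rfl⟩
    exact smul_mem_coneOf hc (subset_coneOf _ rfl)

lemma coneOf_singleton_smul {w : NR d} {c : ℝ} (hc : 0 < c) :
    coneOf {c • w} = coneOf ({w} : Set (NR d)) := by
  apply Set.Subset.antisymm
  · apply coneOf_subset
    intro y hy
    rw [Set.mem_singleton_iff] at hy
    subst hy
    exact smul_mem_coneOf hc.le (subset_coneOf _ rfl)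
  · apply coneOf_subset
    intro y hy
    rw [Set.mem_singleton_iff] at hy
    rw [hy]
    exact mem_coneOf_singleton.mpr ⟨c⁻¹, by positivity,
      by rw [smul_smul, inv_mul_cancel₀ hc.ne', one_smul]⟩

lemma coneOf_subset_zero {S : Set (NR d)} (h : S ⊆ {0}) : coneOf S ⊆ {0} := by
  rintro y ⟨n, c, v, hc, hv, rfl⟩
  have : ∀ i, v i = 0 := fun i => h (hv i)
  simp [this]

lemma span_coneOf (S : Set (NR d)) :
    Submodule.span ℝ (coneOf S) = Submodule.span ℝ S := by
  apply le_antisymm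
  · rw [Submodule.span_le]
    rintro y ⟨n, c, v, hc, hv, rfl⟩
    exact Submodule.sum_mem _ fun i _ =>
      Submodule.smul_mem _ _ (Submodule.subset_span (hv i))
  · exact Submodule.span_mono (subset_coneOf S)

end Lemmas

section Lemmas2
variable {d : ℕ}

/-- Extract a representation of an element of `coneOf (toNR '' A)` as a nonnegative
combination indexed by the finset `A`. -/
lemma rep_over_finset {A : Finset (Fin d → ℤ)} {y : NR d}
    (hy : y ∈ coneOf (toNR '' (↑A : Set (Fin d → ℤ)))) :
    ∃ c : (Fin d → ℤ) → ℝ, (∀ v, 0 ≤ c v) ∧ y = ∑ v ∈ A, c v • toNR v := by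
  classical
  obtain ⟨n, c, v, hc, hv, rfl⟩ := hy
  have hkey : ∀ i, ∃ w, w ∈ A ∧ toNR w = v i := by
    intro i
    obtain ⟨w, hw, hweq⟩ := hv i
    exact ⟨w, hw, hweq⟩
  choose key hkeyA hkeyEq using hkey
  refine ⟨fun w => ∑ i ∈ Finset.univ.filter (fun i => key i = w), c i,
    fun w => Finset.sum_nonneg fun i _ => hc i, ?_⟩
  rw [← Finset.sum_fiberwise_of_maps_to (g := key) (fun i _ => hkeyA i)
    (fun i => c i • v i)]
  refine Finset.sum_congr rfl fun w _ => ?_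
  rw [Finset.sum_smul]
  refine Finset.sum_congr rfl fun i hi => ?_
  rw [Finset.mem_filter] at hi
  rw [← hkeyEq i, hi.2]

lemma isFaceOf_refl (σ : Set (NR d)) : IsFaceOf σ σ :=
  ⟨0, fun _ _ => le_refl _, by ext y; simp⟩

lemma IsFaceOf.subset {ρ σ : Set (NR d)} (h : IsFaceOf ρ σ) : ρ ⊆ σ := by
  obtain ⟨u, _, rfl⟩ := h
  exact Set.sep_subset _ _

/-- The core fact: if a linear functional is nonnegative on the generators and vanishes
at a point of the cone, the point lies in the cone on the generators where it vanishes. -/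
lemma mem_coneOf_vanishing {S : Set (NR d)} {u : NR d →ₗ[ℝ] ℝ}
    (hu : ∀ w ∈ S, 0 ≤ u w) {y : NR d} (hy : y ∈ coneOf S) (hy0 : u y = 0) :
    y ∈ coneOf {w ∈ S | u w = 0} := by
  classical
  obtain ⟨n, c, v, hc, hv, rfl⟩ := hy
  have hterm : ∀ i ∈ Finset.univ (α := Fin n), 0 ≤ c i * u (v i) :=
    fun i _ => mul_nonneg (hc i) (hu _ (hv i))
  have hsum : ∑ i, c i * u (v i) = 0 := by
    rw [← hy0, map_sum]
    exact Finset.sum_congr rfl fun i _ => by rw [map_smul, smul_eq_mul]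
  have hzero : ∀ i ∈ Finset.univ (α := Fin n), c i * u (v i) = 0 :=
    (Finset.sum_eq_zero_iff_of_nonneg hterm).mp hsum
  have hrw : ∑ i, c i • v i = ∑ i ∈ Finset.univ.filter (fun i => u (v i) = 0), c i • v i := by
    rw [Finset.sum_filter]
    refine Finset.sum_congr rfl fun i _ => ?_
    by_cases h : u (v i) = 0
    · simp [h]
    · have : c i = 0 := by
        rcases mul_eq_zero.mp (hzero i (Finset.mem_univ i)) with h' | h'
        · exact h'
        · exact absurd h' h
      simp [h, this]
  rw [hrw]
  set T := Finset.univ.filter (fun i : Fin n => u (v i) = 0) with hT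
  have : ∀ i ∈ T, (fun i => c i • v i) i ∈ coneOf {w ∈ S | u w = 0} := by
    intro i hi
    rw [hT, Finset.mem_filter] at hi
    exact smul_mem_coneOf (hc i) (subset_coneOf _ ⟨hv i, hi.2⟩)
  exact sum_mem_coneOf this

/-- A face of a finitely generated cone is the cone on the generators it contains. -/
lemma IsFaceOf.eq_coneOf_inter {S : Set (NR d)} {ρ : Set (NR d)}
    (h : IsFaceOf ρ (coneOf S)) : ρ = coneOf {w ∈ S | w ∈ ρ} := by
  obtain ⟨u, hu, hρ⟩ := h
  have hgen : ∀ w ∈ S, 0 ≤ u w := fun w hw => hu w (subset_coneOf S hw)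
  have hset : {w ∈ S | w ∈ ρ} = {w ∈ S | u w = 0} := by
    ext w
    simp only [Set.mem_setOf_eq, hρ, and_congr_right_iff]
    intro hw
    constructor
    · rintro ⟨_, h0⟩; exact h0
    · intro h0; exact ⟨subset_coneOf S hw, h0⟩
  rw [hset]
  apply Set.Subset.antisymm
  · intro y hy
    rw [hρ] at hy
    exact mem_coneOf_vanishing hgen hy.1 hy.2
  · intro y hy
    rw [hρ]
    obtain ⟨n, c, v, hc, hv, rfl⟩ := hy
    constructor
    · exact sum_mem_coneOf fun i _ => smul_mem_coneOf (hc i)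
        (coneOf_mono (fun w hw => hw.1) (subset_coneOf _ (hv i)))
    · rw [map_sum]
      refine Finset.sum_eq_zero fun i _ => ?_
      rw [map_smul, smul_eq_mul, (hv i).2, mul_zero]

end Lemmas2

section Lemmas3
variable {d : ℕ}

/-- Coefficient-wise linear independence of the real images of a finset of lattice points. -/
def IndepL {d : ℕ} (A : Finset (Fin d → ℤ)) : Prop :=
  ∀ c : (Fin d → ℤ) → ℝ, ∑ v ∈ A, c v • toNR v = 0 → ∀ v ∈ A, c v = 0

lemma finsetFamily_equiv_setFamily {A : Finset (Fin d → ℤ)} :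
    LinearIndependent ℝ (fun v : (↑A : Set (Fin d → ℤ)) => toNR v.1) ↔
    LinearIndependent ℝ (fun v : {y // y ∈ A} => toNR v.1) := by
  let e : {y // y ∈ A} ≃ (↑A : Set (Fin d → ℤ)) :=
    Equiv.subtypeEquivRight (fun y => (Finset.mem_coe).symm)
  exact linearIndependent_equiv' e rfl

lemma indepL_of_linearIndependent {A : Finset (Fin d → ℤ)}
    (h : LinearIndependent ℝ ((↑) : (toNR '' (↑A : Set (Fin d → ℤ))) → NR d)) :
    IndepL A := by
  classical
  have h' : LinearIndependent ℝ (fun v : (↑A : Set (Fin d → ℤ)) => toNR v.1) := by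
    change LinearIndepOn ℝ toNR (↑A : Set (Fin d → ℤ))
    rw [linearIndepOn_iff_image (toNR_inj.injOn)]
    exact h
  have h'' : LinearIndependent ℝ (fun v : {y // y ∈ A} => toNR v.1) :=
    finsetFamily_equiv_setFamily.mp h'
  intro c hc v hv
  have hsum : ∑ i : {y // y ∈ A}, (fun w => c w.1) i • toNR i.1 = 0 := by
    rw [Finset.sum_coe_sort A (fun v => c v • toNR v)]
    exact hc
  exact Fintype.linearIndependent_iff.mp h'' (fun w => c w.1) hsum ⟨v, hv⟩

lemma linearIndependent_of_indepL {A : Finset (Fin d → ℤ)} (h : IndepL A) :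
    LinearIndependent ℝ ((↑) : (toNR '' (↑A : Set (Fin d → ℤ))) → NR d) := by
  classical
  change LinearIndepOn ℝ id (toNR '' (↑A : Set (Fin d → ℤ)))
  rw [← linearIndepOn_iff_image (toNR_inj.injOn)]
  apply finsetFamily_equiv_setFamily.mpr
  apply Fintype.linearIndependent_iff.mpr
  intro g hg w
  set G : (Fin d → ℤ) → ℝ := fun v => if hv : v ∈ A then g ⟨v, hv⟩ else 0 with hG
  have hgG : ∀ i : {y // y ∈ A}, g i = G i.1 := by
    rintro ⟨v, hv⟩
    simp [hG, hv]
  have hsum : ∑ v ∈ A, G v • toNR v = 0 := by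
    rw [← Finset.sum_coe_sort A (fun v => G v • toNR v), ← hg]
    exact Finset.sum_congr rfl fun i _ => by rw [hgG i]
  have := h G hsum w.1 w.2
  rw [hgG w, this]

/-- Extension of prescribed values on a linearly independent set to a linear functional. -/
lemma exists_dual {s : Set (NR d)} (hli : LinearIndependent ℝ ((↑) : s → NR d))
    (f : NR d → ℝ) : ∃ u : NR d →ₗ[ℝ] ℝ, ∀ w ∈ s, u w = f w := by
  let b := Module.Basis.extend hli
  refine ⟨b.constr ℝ (fun i => f ↑i), fun w hw => ?_⟩
  have hw' : w ∈ LinearIndepOn.extend (v := id) hli (Set.subset_univ s) :=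
    LinearIndepOn.subset_extend (v := id) hli _ hw
  have : w = b ⟨w, hw'⟩ := (Module.Basis.extend_apply_self hli ⟨w, hw'⟩).symm
  rw [this, Module.Basis.constr_basis]
  exact congrArg f this

/-- A subset of an independent generating set spans a face. -/
lemma isFaceOf_coneOf_subset {A B : Finset (Fin d → ℤ)} (hAB : A ⊆ B)
    (hB : IndepL B) :
    IsFaceOf (coneOf (toNR '' (↑A : Set (Fin d → ℤ))))
      (coneOf (toNR '' (↑B : Set (Fin d → ℤ)))) := by
  classical
  obtain ⟨u, hu⟩ := exists_dual (linearIndependent_of_indepL hB)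
    (fun w => if w ∈ toNR '' (↑A : Set (Fin d → ℤ)) then 0 else 1)
  have huA : ∀ w ∈ toNR '' (↑A : Set (Fin d → ℤ)), u w = 0 := by
    rintro w ⟨v, hv, rfl⟩
    rw [hu _ ⟨v, hAB hv, rfl⟩, if_pos ⟨v, hv, rfl⟩]
  have huB : ∀ w ∈ toNR '' (↑B : Set (Fin d → ℤ)), 0 ≤ u w := by
    intro w hw
    rw [hu _ hw]
    split <;> norm_num
  have hunn : ∀ y ∈ coneOf (toNR '' (↑B : Set (Fin d → ℤ))), 0 ≤ u y := by
    rintro y ⟨n, c, v, hc, hv, rfl⟩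
    rw [map_sum]
    exact Finset.sum_nonneg fun i _ => by
      rw [map_smul, smul_eq_mul]
      exact mul_nonneg (hc i) (huB _ (hv i))
  refine ⟨u, hunn, ?_⟩
  have hvanish : {w ∈ toNR '' (↑B : Set (Fin d → ℤ)) | u w = 0}
      = toNR '' (↑A : Set (Fin d → ℤ)) := by
    ext w
    constructor
    · rintro ⟨hwB, hw0⟩
      by_contra hwA
      rw [hu _ hwB, if_neg hwA] at hw0
      norm_num at hw0
    · intro hwA
      obtain ⟨v, hv, rfl⟩ := hwA
      exact ⟨⟨v, hAB hv, rfl⟩, huA _ ⟨v, hv, rfl⟩⟩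
  apply Set.Subset.antisymm
  · intro y hy
    refine ⟨coneOf_mono (Set.image_mono (Finset.coe_subset.mpr hAB)) hy, ?_⟩
    obtain ⟨n, c, v, hc, hv, rfl⟩ := hy
    rw [map_sum]
    exact Finset.sum_eq_zero fun i _ => by
      rw [map_smul, smul_eq_mul, huA _ (hv i), mul_zero]
  · intro y hy
    have := mem_coneOf_vanishing huB hy.1 hy.2
    rw [hvanish] at this
    exact this

/-- An element of an independent set is not a combination of the others. -/
lemma not_dep_of_indepL {B : Finset (Fin d → ℤ)} (hB : IndepL B)
    {w : Fin d → ℤ} (hw : w ∈ B) (c : (Fin d → ℤ) → ℝ)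
    (h : toNR w = ∑ v ∈ B.erase w, c v • toNR v) : False := by
  classical
  set e : (Fin d → ℤ) → ℝ := fun v => if v = w then -1 else c v with he
  have hsum : ∑ v ∈ B, e v • toNR v = 0 := by
    rw [← Finset.add_sum_erase _ _ hw]
    have h1 : e w = -1 := by simp [he]
    have h2 : ∑ v ∈ B.erase w, e v • toNR v = ∑ v ∈ B.erase w, c v • toNR v := by
      refine Finset.sum_congr rfl fun v hv => ?_
      have : v ≠ w := Finset.ne_of_mem_erase hv
      simp [he, this]
    rw [h1, h2, ← h]
    simp
  have := hB e hsum w hw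
  rw [he] at this
  simp at this

/-- Exchange lemma: inserting `x` (a positive combination of `Gσ ⊆ GT` with nonzero
coefficient at `xi`) for `xi` preserves independence. -/
lemma indepL_exchange {GT Gσ : Finset (Fin d → ℤ)} {x xi : Fin d → ℤ}
    (hGT : IndepL GT) (hsub : Gσ ⊆ GT) (hxi : xi ∈ Gσ) (hx : x ∉ GT)
    {c : (Fin d → ℤ) → ℝ} (hrep : toNR x = ∑ v ∈ Gσ, c v • toNR v)
    (hcxi : c xi ≠ 0) : IndepL (insert x (GT.erase xi)) := by
  classical
  intro e hsum v hv
  have hxnot : x ∉ GT.erase xi := fun h => hx (Finset.mem_of_mem_erase h)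
  rw [Finset.sum_insert hxnot, hrep, Finset.smul_sum] at hsum
  set f : (Fin d → ℤ) → ℝ := fun w =>
    (if w ∈ Gσ then e x * c w else 0) + (if w = xi then 0 else e w) with hf
  have hsum' : ∑ w ∈ GT, f w • toNR w = 0 := by
    have hsplit : ∑ w ∈ GT, f w • toNR w =
        (∑ w ∈ GT, (if w ∈ Gσ then e x * c w else 0) • toNR w) +
        (∑ w ∈ GT, (if w = xi then 0 else e w) • toNR w) := by
      rw [← Finset.sum_add_distrib]
      exact Finset.sum_congr rfl fun w _ => by rw [hf]; rw [add_smul]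
    have h1 : ∑ w ∈ GT, (if w ∈ Gσ then e x * c w else 0) • toNR w
        = ∑ w ∈ Gσ, e x • (c w • toNR w) := by
      rw [← Finset.sum_subset hsub (fun w _ hw => by rw [if_neg hw, zero_smul])]
      refine Finset.sum_congr rfl fun w hw => ?_
      rw [if_pos hw, smul_smul]
    have h2 : ∑ w ∈ GT, (if w = xi then 0 else e w) • toNR w
        = ∑ w ∈ GT.erase xi, e w • toNR w := by
      rw [← Finset.add_sum_erase _ _ (hsub hxi)]
      rw [if_pos rfl, zero_smul, zero_add]
      refine Finset.sum_congr rfl fun w hw => ?_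
      rw [if_neg (Finset.ne_of_mem_erase hw)]
    rw [hsplit, h1, h2, hsum]
  have hfzero : ∀ w ∈ GT, f w = 0 := hGT f hsum'
  have hex : e x = 0 := by
    have h0 := hfzero xi (hsub hxi)
    simp only [hf] at h0
    rw [if_pos hxi] at h0
    simp at h0
    exact h0.resolve_right hcxi
  rcases Finset.mem_insert.mp hv with rfl | hv'
  · exact hex
  · have h0 := hfzero v (Finset.mem_of_mem_erase hv')
    simp only [hf] at h0
    have hne : v ≠ xi := Finset.ne_of_mem_erase hv'
    rw [if_neg hne, hex] at h0
    simpa using h0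

end Lemmas3

section Lemmas4
variable {d : ℕ}

/-- Every nonzero lattice vector is a positive multiple of a primitive one. -/
lemma exists_primitive_factor {v : Fin d → ℤ} (hv : v ≠ 0) :
    ∃ (g : ℤ) (w : Fin d → ℤ), 0 < g ∧ IsPrimitive w ∧ v = g • w := by
  classical
  set g : ℤ := ((Finset.univ.gcd v).natAbs : ℤ) with hg
  have hdvd : ∀ i, g ∣ v i := by
    intro i
    rw [hg, Int.natAbs_dvd]
    exact Finset.gcd_dvd (Finset.mem_univ i)
  have hgne : g ≠ 0 := by
    rw [hg]
    intro h
    have h0 : Finset.univ.gcd v = 0 := by exact_mod_cast Int.natAbs_eq_zero.mp (by exact_mod_cast h)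
    rw [Finset.gcd_eq_zero_iff] at h0
    exact hv (funext fun i => h0 i (Finset.mem_univ i))
  have hgpos : 0 < g := lt_of_le_of_ne (by rw [hg]; positivity) (Ne.symm hgne)
  set w : Fin d → ℤ := fun i => v i / g with hw
  have hvw : v = g • w := by
    funext i
    rw [hw]
    simp only [Pi.smul_apply, smul_eq_mul]
    rw [Int.mul_ediv_cancel' (hdvd i)]
  refine ⟨g, w, hgpos, ⟨?_, ?_⟩, hvw⟩
  · intro h
    rw [h, smul_zero] at hvw
    exact hv hvw
  · intro k y hk
    have hky : v = (g * k) • y := by rw [hvw, hk, mul_smul]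
    have hdvd2 : ∀ i, g * k ∣ v i := by
      intro i
      exact ⟨y i, by rw [hky]; simp [mul_assoc]⟩
    have hdg : g * k ∣ Finset.univ.gcd v := Finset.dvd_gcd fun i _ => hdvd2 i
    have hdg2 : g * k ∣ g := hdg.trans (by rw [hg]; exact Int.dvd_natAbs.mpr dvd_rfl)
    have hk1 : k ∣ 1 := (mul_dvd_mul_iff_left hgne).mp (by rw [mul_one]; exact hdg2)
    rcases Int.isUnit_iff.mp (isUnit_of_dvd_one hk1) with h | h
    · exact Or.inl h
    · exact Or.inr h

/-- Two primitive lattice vectors that are positive real multiples of each other agree. -/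
lemma primitive_unique {w v : Fin d → ℤ} (hw : IsPrimitive w) (hv : IsPrimitive v)
    {c : ℝ} (hc : 0 < c) (h : toNR w = c • toNR v) : w = v := by
  have hvne : v ≠ 0 := hv.1
  obtain ⟨i, hi⟩ : ∃ i, v i ≠ 0 := by
    by_contra hno
    push_neg at hno
    exact hvne (funext hno)
  have hcoord : ∀ j, (w j : ℝ) = c * (v j : ℝ) := by
    intro j
    have := congrFun h j
    simpa [toNR] using this
  set a : ℤ := v i with ha
  set b : ℤ := w i with hb
  have hba : (b : ℝ) = c * a := hcoord i
  have hane : a ≠ 0 := hi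
  have hkey : a • w = b • v := by
    funext j
    simp only [Pi.smul_apply, smul_eq_mul]
    have : (a * w j : ℝ) = (b * v j : ℝ) := by
      push_cast
      rw [hcoord j, hba]
      ring
    exact_mod_cast this
  have hbne : b ≠ 0 := by
    intro hb0
    rw [hb0] at hba
    push_cast at hba
    have : (a : ℝ) = 0 := by
      rcases mul_eq_zero.mp hba.symm with h' | h'
      · exact absurd h' hc.ne'
      · exact h'
    exact hane (by exact_mod_cast this)
  set n : ℤ := (Int.gcd a b : ℤ) with hn
  have hnne : n ≠ 0 := by
    rw [hn]
    intro h
    have h0 : Int.gcd a b = 0 := by exact_mod_cast h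
    exact hane ((Int.gcd_eq_zero_iff.mp h0).1)
  have hna : n ∣ a := Int.gcd_dvd_left a b
  have hnb : n ∣ b := Int.gcd_dvd_right a b
  set a' : ℤ := a / n with ha'
  set b' : ℤ := b / n with hb'
  have haa : a = n * a' := by rw [ha', Int.mul_ediv_cancel' hna]
  have hbb : b = n * b' := by rw [hb', Int.mul_ediv_cancel' hnb]
  have hcop : IsCoprime a' b' := by
    rw [Int.isCoprime_iff_gcd_eq_one, ha', hb', hn]
    exact Int.gcd_div_gcd_div_gcd (Int.gcd_pos_iff.mpr (Or.inl hane))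
  have hkey' : a' • w = b' • v := by
    have : n • (a' • w) = n • (b' • v) := by
      rw [← mul_smul, ← mul_smul, ← haa, ← hbb]
      exact hkey
    exact smul_right_injective _ hnne this
  obtain ⟨s, t, hst⟩ := hcop
  have hst' : s * a' + t * b' = 1 := hst
  have hkeyc : ∀ j, a' * w j = b' * v j := by
    intro j
    have := congrFun hkey' j
    simpa using this
  have hwprim : w = b' • (s • v + t • w) := by
    funext j
    simp only [Pi.smul_apply, Pi.add_apply, smul_eq_mul]
    linear_combination s * hkeyc j - w j * hst'
  have hvprim : v = a' • (s • v + t • w) := by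
    funext j
    simp only [Pi.smul_apply, Pi.add_apply, smul_eq_mul]
    linear_combination (-t) * hkeyc j - v j * hst'
  have hb'pm := hw.2 b' _ hwprim
  have ha'pm := hv.2 a' _ hvprim
  have hsign : (b' : ℝ) = c * a' := by
    have h1 : ((n : ℝ)) ≠ 0 := by exact_mod_cast hnne
    have h2 : ((n * b' : ℤ) : ℝ) = c * ((n * a' : ℤ) : ℝ) := by
      rw [← hbb, ← haa]
      exact hba
    push_cast at h2
    have h3 : (n : ℝ) * (b' : ℝ) = (n : ℝ) * (c * (a' : ℝ)) := by linear_combination h2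
    exact mul_left_cancel₀ h1 h3
  have haeqb : a' = b' := by
    rcases ha'pm with h1 | h1 <;> rcases hb'pm with h2 | h2
    · rw [h1, h2]
    · exfalso; rw [h1, h2] at hsign; push_cast at hsign; linarith
    · exfalso; rw [h1, h2] at hsign; push_cast at hsign; linarith
    · rw [h1, h2]
  have : a' • w = a' • v := by rw [hkey', ← haeqb]
  have ha'ne : a' ≠ 0 := by
    rcases ha'pm with h1 | h1 <;> rw [h1] <;> norm_num
  exact smul_right_injective _ ha'ne this

end Lemmas4

section Lemmas5
variable {d : ℕ}

/-- A linear functional nonnegative on `s` vanishing at a point of the intrinsic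
interior of `s` vanishes on all of `s`. -/
lemma vanish_of_relint {s : Set (NR d)} {z : NR d} (hz : z ∈ intrinsicInterior ℝ s)
    (u : NR d →ₗ[ℝ] ℝ) (hu : ∀ y ∈ s, 0 ≤ u y) (hz0 : u z = 0) :
    ∀ y ∈ s, u y = 0 := by
  intro y hy
  obtain ⟨z', hz', hz'eq⟩ := (mem_intrinsicInterior).mp hz
  have hzs : z ∈ s := intrinsicInterior_subset hz
  have hys : y ∈ affineSpan ℝ s := subset_affineSpan ℝ s hy
  -- the path t ↦ lineMap y z (1 + t) stays in the affine span
  have hmem : ∀ t : ℝ, AffineMap.lineMap y z (1 + t) ∈ affineSpan ℝ s := by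
    intro t
    rw [AffineMap.lineMap_apply]
    exact AffineSubspace.smul_vsub_vadd_mem _ (1 + t)
      (subset_affineSpan ℝ s hzs) hys hys
  set γ : ℝ → affineSpan ℝ s := fun t => ⟨AffineMap.lineMap y z (1 + t), hmem t⟩ with hγ
  have hγcont : Continuous γ := by
    apply Continuous.subtype_mk
    exact AffineMap.lineMap_continuous.comp (continuous_const.add continuous_id)
  have hγ0 : γ 0 = z' := by
    apply Subtype.ext
    rw [hγ]
    simp only [add_zero, AffineMap.lineMap_apply_one]
    exact hz'eq.symm
  have hopen : IsOpen (γ ⁻¹' interior (((↑) : affineSpan ℝ s → NR d) ⁻¹' s)) :=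
    isOpen_interior.preimage hγcont
  have h0mem : (0 : ℝ) ∈ γ ⁻¹' interior (((↑) : affineSpan ℝ s → NR d) ⁻¹' s) := by
    rw [Set.mem_preimage, hγ0]
    exact hz'
  obtain ⟨ε, hε, hball⟩ := Metric.isOpen_iff.mp hopen 0 h0mem
  set t := ε / 2 with ht
  have htpos : 0 < t := by positivity
  have htball : t ∈ Metric.ball (0 : ℝ) ε := by
    rw [Metric.mem_ball, Real.dist_eq, sub_zero, abs_of_pos htpos, ht]
    linarith
  have hmem2 : AffineMap.lineMap y z (1 + t) ∈ s := by
    have := hball htball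
    rw [Set.mem_preimage] at this
    have := interior_subset this
    rwa [Set.mem_preimage] at this
  have hval : u (AffineMap.lineMap y z (1 + t)) = (1 + t) * (u z - u y) + u y := by
    rw [AffineMap.lineMap_apply]
    simp only [vsub_eq_sub, vadd_eq_add]
    rw [map_add, map_smul, map_sub, smul_eq_mul]
  have h1 := hu _ hmem2
  rw [hval, hz0] at h1
  have h2 := hu y hy
  nlinarith

/-- A face of `σ` containing a point of the intrinsic interior is `σ` itself. -/
lemma face_eq_of_relint_mem {σ ρ : Set (NR d)} {z : NR d}
    (hz : z ∈ intrinsicInterior ℝ σ) (hface : IsFaceOf ρ σ) (hzρ : z ∈ ρ) : ρ = σ := by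
  obtain ⟨u, hu, hρ⟩ := hface
  have hz0 : u z = 0 := by
    rw [hρ] at hzρ
    exact hzρ.2
  have := vanish_of_relint hz u hu hz0
  rw [hρ]
  ext y
  constructor
  · rintro ⟨hy, _⟩; exact hy
  · intro hy; exact ⟨hy, this y hy⟩

lemma coneDim_le_one {σ : Set (NR d)} {w : NR d} (h : σ ⊆ coneOf {w}) :
    coneDim σ ≤ 1 := by
  have hspan : Submodule.span ℝ σ ≤ Submodule.span ℝ ({w} : Set (NR d)) := by
    calc Submodule.span ℝ σ ≤ Submodule.span ℝ (coneOf {w}) := Submodule.span_mono h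
    _ = Submodule.span ℝ ({w} : Set (NR d)) := span_coneOf _
  calc coneDim σ ≤ Module.finrank ℝ (Submodule.span ℝ ({w} : Set (NR d))) :=
        Submodule.finrank_mono hspan
  _ ≤ 1 := by
      rcases eq_or_ne w 0 with rfl | hw
      · rw [Submodule.span_singleton_eq_bot.mpr rfl]
        simp
      · rw [finrank_span_singleton hw]

lemma coneDim_le_card {σ : Set (NR d)} {A : Finset (Fin d → ℤ)}
    (h : σ = coneOf (toNR '' (↑A : Set (Fin d → ℤ)))) : coneDim σ ≤ A.card := by
  classical
  have himg : toNR '' (↑A : Set (Fin d → ℤ)) = ↑(A.image toNR) := by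
    rw [Finset.coe_image]
  have : coneDim σ ≤ (A.image toNR).card := by
    unfold coneDim
    rw [h, span_coneOf, himg]
    exact finrank_span_finset_le_card _
  exact this.trans (Finset.card_image_le)

end Lemmas5

section Lemmas6
variable {d : ℕ}

/-- Main structure of the generators of a cone in a finite simplicial fan. -/
lemma Fan.coneGens_pack (F : Fan d) (hs : F.IsSimplicial) {τ : Set (NR d)}
    (hτ : τ ∈ F.cones) :
    ∃ GT : Finset (Fin d → ℤ), (↑GT : Set (Fin d → ℤ)) = F.coneGens τ ∧ IndepL GT ∧
      τ = coneOf (toNR '' (↑GT : Set (Fin d → ℤ))) := by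
  classical
  obtain ⟨S, hSli, hSeq⟩ := hs τ hτ
  set sτ : Set (NR d) := toNR '' (↑S : Set (Fin d → ℤ)) with hsτ
  have h0 : ∀ w ∈ sτ, w ≠ 0 := fun w hw => hSli.ne_zero ⟨w, hw⟩
  -- each generator spans a face of τ
  have rayface : ∀ w ∈ sτ, IsFaceOf (coneOf {w}) τ := by
    intro w hw
    obtain ⟨u, hu⟩ := exists_dual hSli (fun w' => if w' = w then 0 else 1)
    have hugen : ∀ w' ∈ sτ, 0 ≤ u w' := by
      intro w' hw'
      rw [hu w' hw']
      split <;> norm_num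
    refine ⟨u, ?_, ?_⟩
    · intro y hy
      rw [hSeq] at hy
      obtain ⟨n, cc, vv, hcc, hvv, rfl⟩ := hy
      rw [map_sum]
      exact Finset.sum_nonneg fun i _ => by
        rw [map_smul, smul_eq_mul]
        exact mul_nonneg (hcc i) (hugen _ (hvv i))
    · apply Set.Subset.antisymm
      · intro y hy
        obtain ⟨cy, hcy, rfl⟩ := mem_coneOf_singleton.mp hy
        constructor
        · rw [hSeq]
          exact smul_mem_coneOf hcy (subset_coneOf _ hw)
        · rw [map_smul, smul_eq_mul, hu w hw, if_pos rfl, mul_zero]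
      · intro y hy
        obtain ⟨hyτ, hy0⟩ := hy
        rw [hSeq] at hyτ
        have := mem_coneOf_vanishing hugen hyτ hy0
        refine coneOf_mono ?_ this
        intro w' hw'
        obtain ⟨hw's, hw'0⟩ := hw'
        rw [Set.mem_singleton_iff]
        by_contra hne
        rw [hu w' hw's, if_neg hne] at hw'0
        norm_num at hw'0
  have raymem : ∀ w ∈ sτ, coneOf {w} ∈ F.cones :=
    fun w hw => F.face_mem τ hτ _ (rayface w hw)
  -- each generator is a positive multiple of an element of coneGens τ
  have primgen : ∀ w ∈ sτ, ∃ p ∈ F.coneGens τ, ∃ g : ℝ, 0 < g ∧ w = g • toNR p := by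
    intro w hw
    obtain ⟨s', hs', rfl⟩ := hw
    have hs'ne : s' ≠ 0 := by
      intro h
      exact h0 _ (Set.mem_image_of_mem _ hs') (by rw [h]; exact toNR_eq_zero.mpr rfl)
    obtain ⟨g, p, hgpos, hpprim, hfac⟩ := exists_primitive_factor hs'ne
    have heq : toNR s' = (g : ℝ) • toNR p := by rw [hfac, toNR_zsmul]
    have hgR : (0 : ℝ) < (g : ℝ) := by exact_mod_cast hgpos
    have hray : coneOf {toNR p} = coneOf {toNR s'} := by
      rw [heq, coneOf_singleton_smul hgR]
    have hp : p ∈ F.coneGens τ := by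
      refine ⟨⟨hpprim, ?_⟩, ?_⟩
      · rw [hray]
        exact raymem _ (Set.mem_image_of_mem _ hs')
      · have : toNR p ∈ coneOf {toNR s'} := by
          rw [← hray]
          exact subset_coneOf _ rfl
        exact (rayface _ (Set.mem_image_of_mem _ hs')).subset this
    exact ⟨p, hp, (g : ℝ), hgR, heq⟩
  -- each element of coneGens τ lies on the ray of a generator
  have genray : ∀ v ∈ F.coneGens τ, ∃ w ∈ sτ, ∃ c : ℝ, 0 < c ∧ w = c • toNR v := by
    intro v hv
    obtain ⟨⟨hvprim, hvray⟩, hvτ⟩ := hv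
    have hsub : coneOf {toNR v} ⊆ τ := by
      rw [hSeq]
      apply coneOf_subset
      intro y hy
      rw [Set.mem_singleton_iff] at hy
      rw [hy, ← hSeq]
      exact hvτ
    have hface : IsFaceOf (coneOf {toNR v}) τ := by
      have := F.inter_face τ hτ _ hvray
      rwa [Set.inter_eq_self_of_subset_right hsub] at this
    rw [hSeq] at hface
    have hexp := hface.eq_coneOf_inter
    have hvne : toNR v ≠ 0 := fun h => hvprim.1 (toNR_eq_zero.mp h)
    have hvmem : toNR v ∈ coneOf {w ∈ sτ | w ∈ coneOf {toNR v}} := by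
      rw [← hexp]
      exact subset_coneOf _ rfl
    obtain ⟨w, hwmem, hwne⟩ : ∃ w, w ∈ {w ∈ sτ | w ∈ coneOf {toNR v}} ∧ w ≠ 0 := by
      by_contra hno
      push_neg at hno
      exact hvne (coneOf_subset_zero (fun w hw => hno w hw) hvmem)
    obtain ⟨cc, hcc0, hcceq⟩ := mem_coneOf_singleton.mp hwmem.2
    have hccpos : 0 < cc := by
      rcases hcc0.lt_or_eq with h | h
      · exact h
      · exfalso; apply hwne; rw [hcceq, ← h, zero_smul]
    exact ⟨w, hwmem.1, cc, hccpos, hcceq⟩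
  -- choice functions (made total)
  have genray' : ∀ v : Fin d → ℤ, ∃ wc : NR d × ℝ,
      v ∈ F.coneGens τ → (wc.1 ∈ sτ ∧ 0 < wc.2 ∧ wc.1 = wc.2 • toNR v) := by
    intro v
    by_cases hv : v ∈ F.coneGens τ
    · obtain ⟨w, hw, c, hc, he⟩ := genray v hv
      exact ⟨⟨w, c⟩, fun _ => ⟨hw, hc, he⟩⟩
    · exact ⟨⟨0, 1⟩, fun h => absurd h hv⟩
  choose wc hwc using genray'
  set wf : (Fin d → ℤ) → NR d := fun v => (wc v).1 with hwf
  set cf : (Fin d → ℤ) → ℝ := fun v => (wc v).2 with hcf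
  have hwfs : ∀ v ∈ F.coneGens τ, wf v ∈ sτ := fun v hv => ((hwc v) hv).1
  have hcfpos : ∀ v ∈ F.coneGens τ, 0 < cf v := fun v hv => ((hwc v) hv).2.1
  have hwfeq : ∀ v ∈ F.coneGens τ, wf v = cf v • toNR v := fun v hv => ((hwc v) hv).2.2
  have hprim : ∀ v ∈ F.coneGens τ, IsPrimitive v := fun v hv => hv.1.1
  -- injectivity
  have hinj : ∀ v₁ ∈ F.coneGens τ, ∀ v₂ ∈ F.coneGens τ, wf v₁ = wf v₂ → v₁ = v₂ := by
    intro v₁ hv₁ v₂ hv₂ heq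
    have h1 := hwfeq v₁ hv₁
    have h2 := hwfeq v₂ hv₂
    have : toNR v₁ = (cf v₂ / cf v₁) • toNR v₂ := by
      rw [div_eq_mul_inv, mul_comm, mul_smul]
      rw [← h2, ← heq, h1]
      rw [smul_smul, inv_mul_cancel₀ (hcfpos v₁ hv₁).ne', one_smul]
    exact primitive_unique (hprim v₁ hv₁) (hprim v₂ hv₂)
      (div_pos (hcfpos v₂ hv₂) (hcfpos v₁ hv₁)) this
  -- finiteness
  have hfin : (F.coneGens τ).Finite := by
    apply Set.Finite.of_finite_image (f := wf)
    · exact (S.finite_toSet.image toNR).subset (by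
        rintro w ⟨v, hv, rfl⟩
        exact hwfs v hv)
    · exact fun v₁ hv₁ v₂ hv₂ h => hinj v₁ hv₁ v₂ hv₂ h
  refine ⟨hfin.toFinset, hfin.coe_toFinset, ?_, ?_⟩
  · -- independence
    intro co hco v0 hv0
    rw [hfin.mem_toFinset] at hv0
    have hGTmem : ∀ v ∈ hfin.toFinset, v ∈ F.coneGens τ := fun v hv => hfin.mem_toFinset.mp hv
    -- rewrite the sum via wf
    have hstep : ∀ v ∈ hfin.toFinset, co v • toNR v = (co v / cf v) • wf v := by
      intro v hv
      have h1 := hwfeq v (hGTmem v hv)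
      rw [h1, smul_smul, div_mul_cancel₀]
      exact (hcfpos v (hGTmem v hv)).ne'
    rw [Finset.sum_congr rfl hstep] at hco
    -- key into S
    have hkey' : ∀ v : Fin d → ℤ, ∃ s' : Fin d → ℤ,
        v ∈ hfin.toFinset → (s' ∈ S ∧ toNR s' = wf v) := by
      intro v
      by_cases hv : v ∈ hfin.toFinset
      · obtain ⟨s', hs', he⟩ := hwfs v (hGTmem v hv)
        exact ⟨s', fun _ => ⟨hs', he⟩⟩
      · exact ⟨0, fun h => absurd h hv⟩
    choose key hkey using hkey'
    have hkeyS : ∀ v ∈ hfin.toFinset, key v ∈ S := fun v hv => (hkey v hv).1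
    have hkeyEq : ∀ v ∈ hfin.toFinset, toNR (key v) = wf v := fun v hv => (hkey v hv).2
    have hco2 : ∑ s' ∈ S, (∑ v ∈ hfin.toFinset.filter (fun v => key v = s'),
        (co v / cf v)) • toNR s' = 0 := by
      rw [← hco, ← Finset.sum_fiberwise_of_maps_to (g := key) hkeyS
        (fun v => (co v / cf v) • wf v)]
      refine Finset.sum_congr rfl fun s' _ => ?_
      rw [Finset.sum_smul]
      refine Finset.sum_congr rfl fun v hv => ?_
      rw [Finset.mem_filter] at hv
      rw [← hkeyEq v hv.1, hv.2]
    have hDzero := indepL_of_linearIndependent hSli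
      (fun s' => ∑ v ∈ hfin.toFinset.filter (fun v => key v = s'), (co v / cf v)) hco2
    have hfilter : hfin.toFinset.filter (fun v => key v = key v0) = {v0} := by
      ext v
      rw [Finset.mem_filter, Finset.mem_singleton]
      constructor
      · rintro ⟨hv, hkv⟩
        apply hinj v (hGTmem v hv) v0 hv0
        rw [← hkeyEq v hv, ← hkeyEq v0 (hfin.mem_toFinset.mpr hv0), hkv]
      · rintro rfl
        exact ⟨hfin.mem_toFinset.mpr hv0, rfl⟩
    have hfinal : ∑ v ∈ hfin.toFinset.filter (fun v => key v = key v0), co v / cf v = 0 :=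
      hDzero (key v0) (hkeyS v0 (hfin.mem_toFinset.mpr hv0))
    rw [hfilter, Finset.sum_singleton] at hfinal
    rcases div_eq_zero_iff.mp hfinal with h | h
    · exact h
    · exact absurd h (hcfpos v0 hv0).ne'
  · -- τ = coneOf (toNR '' GT)
    rw [hfin.coe_toFinset]
    apply Set.Subset.antisymm
    · have h1 : sτ ⊆ coneOf (toNR '' F.coneGens τ) := by
        intro w hw
        obtain ⟨p, hp, g, hg, he⟩ := primgen w hw
        rw [he]
        exact smul_mem_coneOf hg.le (subset_coneOf _ (Set.mem_image_of_mem _ hp))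
      intro y hy
      rw [hSeq] at hy
      exact coneOf_subset h1 hy
    · rw [hSeq]
      apply coneOf_subset
      rintro y ⟨v, hv, rfl⟩
      exact hv.2

/-- A subset of the generators of a cone spans a cone of a simplicial fan. -/
lemma Fan.subcone_mem (F : Fan d) {τ : Set (NR d)} (hτ : τ ∈ F.cones)
    {GT : Finset (Fin d → ℤ)} (hind : IndepL GT)
    (hτeq : τ = coneOf (toNR '' (↑GT : Set (Fin d → ℤ))))
    {A : Finset (Fin d → ℤ)} (hA : A ⊆ GT) :
    IsFaceOf (coneOf (toNR '' (↑A : Set (Fin d → ℤ)))) τ ∧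
      coneOf (toNR '' (↑A : Set (Fin d → ℤ))) ∈ F.cones := by
  have hface := isFaceOf_coneOf_subset hA hind
  rw [← hτeq] at hface
  exact ⟨hface, F.face_mem τ hτ _ hface⟩

end Lemmas6

section Lemmas7
variable {d : ℕ}

lemma set_decomp {α : Type*} {GT Gσ : Set α} {xi : α} (h : Gσ ⊆ GT) (hxi : xi ∈ Gσ) :
    (GT \ Gσ) ∪ (Gσ \ {xi}) = GT \ {xi} := by
  ext v
  simp only [Set.mem_union, Set.mem_diff, Set.mem_singleton_iff]
  constructor
  · rintro (⟨h1, h2⟩ | ⟨h1, h2⟩)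
    · exact ⟨h1, fun he => h2 (he ▸ hxi)⟩
    · exact ⟨h h1, h2⟩
  · rintro ⟨h1, h2⟩
    by_cases hv : v ∈ Gσ
    · exact Or.inr ⟨hv, h2⟩
    · exact Or.inl ⟨h1, hv⟩

end Lemmas7

/-- Every primitive collection of the star subdivision containing `x`
comes from a primitive collection of the original fan. -/
theorem primitiveCollection_of_starSubdivision_exists_orig {d : ℕ} (F F' : Fan d)
    (hc : F.IsComplete) (hs : F.IsSimplicial)
    (σ : Set (NR d)) (hσ : σ ∈ F.cones) (hdim : 2 ≤ coneDim σ)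
    (x : Fin d → ℤ) (hx : IsPrimitive x) (hxσ : toNR x ∈ intrinsicInterior ℝ σ)
    (Gσ : Finset (Fin d → ℤ)) (hGσ : (↑Gσ : Set (Fin d → ℤ)) = F.coneGens σ)
    (hsub : F'.IsStarSubdivisionOf F σ x) :
    ∀ Pstar : Finset (Fin d → ℤ), F'.IsPrimitiveCollection Pstar → x ∈ Pstar →
      ∃ P : Finset (Fin d → ℤ), F.IsPrimitiveCollection P ∧
        insert x (P \ Gσ) = Pstar := by
  classical
  intro Pstar hP hxP
  obtain ⟨hPne, hPgen, hPnc, hPerase⟩ := hP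
  -- the σ package
  obtain ⟨Gσ', hGσ', hGσind', hσeq'⟩ := F.coneGens_pack hs hσ
  have hGσGσ' : Gσ' = Gσ := Finset.coe_injective (hGσ'.trans hGσ.symm)
  have hGσind : IndepL Gσ := hGσGσ' ▸ hGσind'
  have hσeq : σ = coneOf (toNR '' (↑Gσ : Set (Fin d → ℤ))) := hGσGσ' ▸ hσeq'
  have hxσ' : toNR x ∈ σ := intrinsicInterior_subset hxσ
  have hxne : toNR x ≠ 0 := fun h => hx.1 (toNR_eq_zero.mp h)
  -- membership in the star subdivision
  have hF' : F'.cones = F.starSub σ x := hsub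
  have hmemF' : ∀ D : Set (NR d), D ∈ F'.cones ↔
      ((D ∈ F.cones ∧ ¬ IsFaceOf σ D) ∨
        (∃ τ ∈ F.cones, IsFaceOf σ τ ∧ ∃ xi ∈ F.coneGens σ,
          IsFaceOf D (coneOf (toNR ''
            (insert x ((F.coneGens τ \ F.coneGens σ) ∪ (F.coneGens σ \ {xi}))))))) := by
    intro D
    rw [hF']
    exact Iff.rfl
  -- a cone of F containing x has σ as a face
  have hfaceσ : ∀ D ∈ F.cones, toNR x ∈ D → σ ⊆ D ∧ IsFaceOf σ D := by
    intro D hD hxD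
    have h1 : IsFaceOf (σ ∩ D) σ := F.inter_face σ hσ D hD
    have h2 : σ ∩ D = σ := face_eq_of_relint_mem hxσ h1 ⟨hxσ', hxD⟩
    have hsub2 : σ ⊆ D := by rw [← h2]; exact Set.inter_subset_right
    have h3 : IsFaceOf (D ∩ σ) D := F.inter_face D hD σ hσ
    rw [Set.inter_eq_self_of_subset_right hsub2] at h3
    exact ⟨hsub2, h3⟩
  -- a cone of F' containing x is a face of a new cone
  have hstar2 : ∀ D ∈ F'.cones, toNR x ∈ D →
      ∃ τ ∈ F.cones, IsFaceOf σ τ ∧ ∃ xi ∈ F.coneGens σ,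
        IsFaceOf D (coneOf (toNR ''
          (insert x ((F.coneGens τ \ F.coneGens σ) ∪ (F.coneGens σ \ {xi}))))) := by
    intro D hD hxD
    rcases (hmemF' D).mp hD with ⟨hDF, hnf⟩ | h
    · exact absurd (hfaceσ D hDF hxD).2 hnf
    · exact h
  -- x is not a ray generator of F
  have hxgen : x ∉ F.genSet := by
    intro hxg
    have hray : coneOf {toNR x} ∈ F.cones := hxg.2
    have h1 := (hfaceσ _ hray (subset_coneOf _ rfl)).1
    have h2 := coneDim_le_one h1
    omega
  have hGσgen : ∀ v ∈ Gσ, v ∈ F.coneGens σ := by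
    intro v hv
    have : v ∈ (↑Gσ : Set (Fin d → ℤ)) := hv
    rwa [hGσ] at this
  have hxGσ : x ∉ Gσ := fun h => hxgen (hGσgen x h).1
  have hGσcard : 2 ≤ Gσ.card := le_trans hdim (coneDim_le_card hσeq)
  -- elements of Pstar other than x are ray generators of F
  have hPF : ∀ v ∈ Pstar, v ≠ x → v ∈ F.genSet := by
    intro v hv hvx
    have hvgen' : v ∈ F'.genSet := hPgen hv
    obtain ⟨hvprim, hvray'⟩ := hvgen'
    rcases (hmemF' _).mp hvray' with ⟨hDF, _⟩ | ⟨τ, hτ, hfc, xi, hxi, hface⟩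
    · exact ⟨hvprim, hDF⟩
    · have hexp := hface.eq_coneOf_inter
      have hvne : toNR v ≠ 0 := fun h => hvprim.1 (toNR_eq_zero.mp h)
      have hvmem : toNR v ∈ coneOf {w ∈ toNR ''
          (insert x ((F.coneGens τ \ F.coneGens σ) ∪ (F.coneGens σ \ {xi}))) |
            w ∈ coneOf {toNR v}} := by
        rw [← hexp]
        exact subset_coneOf _ rfl
      obtain ⟨w, hwmem, hwne⟩ : ∃ w, w ∈ {w ∈ toNR ''
          (insert x ((F.coneGens τ \ F.coneGens σ) ∪ (F.coneGens σ \ {xi}))) |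
            w ∈ coneOf {toNR v}} ∧ w ≠ 0 := by
        by_contra hno
        push_neg at hno
        exact hvne (coneOf_subset_zero (fun w hw => hno w hw) hvmem)
      obtain ⟨hwimg, hwc⟩ := hwmem
      obtain ⟨u, hu, rfl⟩ := hwimg
      obtain ⟨cc, hcc0, hcceq⟩ := mem_coneOf_singleton.mp hwc
      have hccpos : 0 < cc := by
        rcases hcc0.lt_or_eq with h | h
        · exact h
        · exfalso; apply hwne; rw [hcceq, ← h, zero_smul]
      have huprim : IsPrimitive u := by
        rcases Set.mem_insert_iff.mp hu with rfl | hu'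
        · exact hx
        · rcases hu' with ⟨h1, _⟩ | ⟨h1, _⟩
          · exact h1.1.1
          · exact h1.1.1
      have huv : u = v := primitive_unique huprim hvprim hccpos hcceq
      subst huv
      rcases Set.mem_insert_iff.mp hu with h | hu'
      · exact absurd h hvx
      · rcases hu' with ⟨h1, _⟩ | ⟨h1, _⟩
        · exact h1.1
        · exact h1.1
  -- positive representation of x over Gσ
  obtain ⟨cx, hcxpos, hcxrep⟩ : ∃ c : (Fin d → ℤ) → ℝ,
      (∀ v ∈ Gσ, 0 < c v) ∧ toNR x = ∑ v ∈ Gσ, c v • toNR v := by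
    have hx1 : toNR x ∈ coneOf (toNR '' (↑Gσ : Set (Fin d → ℤ))) := by
      rw [← hσeq]; exact hxσ'
    obtain ⟨c, hc0, hceq⟩ := rep_over_finset hx1
    refine ⟨c, ?_, hceq⟩
    intro xi hxi
    rcases (hc0 xi).lt_or_eq with h | h
    · exact h
    exfalso
    have hsum' : toNR x = ∑ v ∈ Gσ.erase xi, c v • toNR v := by
      rw [hceq, ← Finset.add_sum_erase _ _ hxi, ← h, zero_smul, zero_add]
    have hxin : toNR x ∈ coneOf (toNR '' (↑(Gσ.erase xi) : Set (Fin d → ℤ))) := by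
      rw [hsum']
      exact finsetSum_mem_coneOf (fun v _ => hc0 v)
        (fun v hv => Set.mem_image_of_mem _ hv)
    have hface := isFaceOf_coneOf_subset (Finset.erase_subset xi Gσ) hGσind
    rw [← hσeq] at hface
    have heq := face_eq_of_relint_mem hxσ hface hxin
    have hximem : toNR xi ∈ coneOf (toNR '' (↑(Gσ.erase xi) : Set (Fin d → ℤ))) := by
      rw [heq]
      exact (hGσgen xi hxi).2
    obtain ⟨cc, hcc0, hcceq⟩ := rep_over_finset hximem
    exact not_dep_of_indepL hGσind hxi cc hcceq
  -- the new big cones are contained in τ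
  have hCτ : ∀ τ ∈ F.cones, IsFaceOf σ τ → ∀ xi : Fin d → ℤ,
      coneOf (toNR '' (insert x ((F.coneGens τ \ F.coneGens σ) ∪
        (F.coneGens σ \ {xi})))) ⊆ τ := by
    intro τ hτ hfc xi
    obtain ⟨GT, hGT, hGTind, hτeq⟩ := F.coneGens_pack hs hτ
    have himg : toNR '' (insert x ((F.coneGens τ \ F.coneGens σ) ∪
        (F.coneGens σ \ {xi}))) ⊆ τ := by
      rintro w ⟨u, hu, rfl⟩
      rcases Set.mem_insert_iff.mp hu with rfl | hu'
      · exact hfc.subset hxσ'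
      · rcases hu' with ⟨h1, _⟩ | ⟨h1, _⟩
        · exact h1.2
        · exact hfc.subset h1.2
    have h2 : coneOf (toNR '' (insert x ((F.coneGens τ \ F.coneGens σ) ∪
        (F.coneGens σ \ {xi})))) ⊆ coneOf (toNR '' (↑GT : Set (Fin d → ℤ))) := by
      apply coneOf_subset
      rw [← hτeq]
      exact himg
    rwa [← hτeq] at h2
  -- key exclusion: the omitted generator is not in the new cone
  have hF17 : ∀ τ ∈ F.cones, IsFaceOf σ τ → ∀ xi ∈ Gσ,
      toNR xi ∉ coneOf (toNR '' (insert x ((F.coneGens τ \ F.coneGens σ) ∪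
        (F.coneGens σ \ {xi})))) := by
    intro τ hτ hfc xi hxiGσ hmem
    obtain ⟨GT, hGT, hGTind, hτeq⟩ := F.coneGens_pack hs hτ
    have hστ : σ ⊆ τ := hfc.subset
    have hGσGT : Gσ ⊆ GT := by
      intro v hv
      rw [← Finset.mem_coe, hGT]
      exact ⟨(hGσgen v hv).1, hστ (hGσgen v hv).2⟩
    have hxGT : x ∉ GT := by
      intro h
      have : x ∈ F.coneGens τ := by rw [← hGT]; exact h
      exact hxgen this.1
    have hsetid : (insert x ((F.coneGens τ \ F.coneGens σ) ∪ (F.coneGens σ \ {xi})))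
        = (↑(insert x (GT.erase xi)) : Set (Fin d → ℤ)) := by
      rw [Finset.coe_insert, Finset.coe_erase, ← hGT, ← hGσ]
      rw [set_decomp (Finset.coe_subset.mpr hGσGT) hxiGσ]
    rw [hsetid] at hmem
    obtain ⟨b, hb0, hbeq⟩ := rep_over_finset hmem
    have hxnot : x ∉ GT.erase xi := fun h => hxGT (Finset.mem_of_mem_erase h)
    rw [Finset.sum_insert hxnot] at hbeq
    -- assemble a vanishing combination over GT
    set f : (Fin d → ℤ) → ℝ := fun w =>
      (if w ∈ Gσ then b x * cx w else 0) + (if w = xi then -1 else b w) with hf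
    have hsum' : ∑ w ∈ GT, f w • toNR w = 0 := by
      have hsplit : ∑ w ∈ GT, f w • toNR w =
          (∑ w ∈ GT, (if w ∈ Gσ then b x * cx w else 0) • toNR w) +
          (∑ w ∈ GT, (if w = xi then -1 else b w) • toNR w) := by
        rw [← Finset.sum_add_distrib]
        exact Finset.sum_congr rfl fun w _ => by rw [hf]; rw [add_smul]
      have h1 : ∑ w ∈ GT, (if w ∈ Gσ then b x * cx w else 0) • toNR w
          = b x • toNR x := by
        rw [← Finset.sum_subset hGσGT (fun w _ hw => by rw [if_neg hw, zero_smul])]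
        rw [hcxrep, Finset.smul_sum]
        refine Finset.sum_congr rfl fun w hw => ?_
        rw [if_pos hw, smul_smul]
      have h2 : ∑ w ∈ GT, (if w = xi then -1 else b w) • toNR w
          = - toNR xi + ∑ w ∈ GT.erase xi, b w • toNR w := by
        rw [← Finset.add_sum_erase _ _ (hGσGT hxiGσ)]
        rw [if_pos rfl, neg_one_smul]
        congr 1
        refine Finset.sum_congr rfl fun w hw => ?_
        rw [if_neg (Finset.ne_of_mem_erase hw)]
      rw [hsplit, h1, h2]
      have : ∑ w ∈ GT.erase xi, b w • toNR w = toNR xi - b x • toNR x := by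
        rw [hbeq]; abel
      rw [this]
      abel
    have hfzero := hGTind f hsum'
    have hxi0 : b x * cx xi = 1 := by
      have h0 := hfzero xi (hGσGT hxiGσ)
      simp only [hf] at h0
      rw [if_pos hxiGσ] at h0
      simp at h0
      linarith
    have hbxpos : 0 < b x := by
      have := hcxpos xi hxiGσ
      nlinarith
    obtain ⟨xj, hxjGσ, hxjne⟩ := Finset.exists_mem_ne (show 1 < Gσ.card by omega) xi
    have h0 := hfzero xj (hGσGT hxjGσ)
    simp only [hf] at h0
    rw [if_pos hxjGσ, if_neg hxjne] at h0
    have := hcxpos xj hxjGσ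
    have := hb0 xj
    nlinarith
  -- Q is the rest of Pstar
  set Q : Finset (Fin d → ℤ) := Pstar.erase x with hQ
  have hxray' : coneOf {toNR x} ∈ F'.cones := (hPgen hxP).2
  have hQne : Q.Nonempty := by
    by_contra hno
    rw [Finset.not_nonempty_iff_eq_empty] at hno
    have hsub1 : Pstar ⊆ {x} := by
      intro y hy
      rw [Finset.mem_singleton]
      by_contra hyx
      have : y ∈ Q := Finset.mem_erase.mpr ⟨hyx, hy⟩
      rw [hno] at this
      exact absurd this (Finset.notMem_empty y)
    have hPeq : Pstar = {x} := Finset.Subset.antisymm hsub1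
      (Finset.singleton_subset_iff.mpr hxP)
    apply hPnc
    rw [hPeq]
    have : (toNR '' (↑({x} : Finset (Fin d → ℤ)) : Set (Fin d → ℤ))) = {toNR x} := by
      rw [Finset.coe_singleton, Set.image_singleton]
    rw [this]
    exact hxray'
  -- no element of Pstar is a generator of σ
  have hxiout : ∃ xi ∈ Gσ, xi ∉ Pstar := by
    by_contra hno
    push_neg at hno
    by_cases hcase : ∃ y ∈ Pstar, y ∉ insert x Gσ
    · obtain ⟨y, hyP, hyout⟩ := hcase
      have hyx : y ≠ x := fun h => hyout (h ▸ Finset.mem_insert_self x Gσ)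
      have hyGσ : y ∉ Gσ := fun h => hyout (Finset.mem_insert_of_mem h)
      have hD : coneOf (toNR '' ((↑Pstar : Set (Fin d → ℤ)) \ {y})) ∈ F'.cones :=
        hPerase y hyP
      have hxD : toNR x ∈ coneOf (toNR '' ((↑Pstar : Set (Fin d → ℤ)) \ {y})) :=
        subset_coneOf _ ⟨x, ⟨hxP, hyx ∘ Eq.symm⟩, rfl⟩
      obtain ⟨τ, hτ, hfc, xi, hxi, hface⟩ := hstar2 _ hD hxD
      have hxiGσ : xi ∈ Gσ := by rw [← Finset.mem_coe, hGσ]; exact hxi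
      have hxiD : toNR xi ∈ coneOf (toNR '' ((↑Pstar : Set (Fin d → ℤ)) \ {y})) :=
        subset_coneOf _ ⟨xi, ⟨hno xi hxiGσ, fun h => hyGσ (h ▸ hxiGσ)⟩, rfl⟩
      exact hF17 τ hτ hfc xi hxiGσ (hface.subset hxiD)
    · push_neg at hcase
      have hPeq : Pstar = insert x Gσ := by
        apply Finset.Subset.antisymm
        · exact fun y hy => hcase y hy
        · intro y hy
          rcases Finset.mem_insert.mp hy with rfl | hyGσ
          · exact hxP
          · exact hno y hyGσ
      have hPQ : (↑Pstar : Set (Fin d → ℤ)) \ {x} = (↑Gσ : Set (Fin d → ℤ)) := by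
        rw [hPeq, Finset.coe_insert]
        exact Set.insert_diff_self_of_notMem (fun h => hxGσ h)
      have hD := hPerase x hxP
      rw [hPQ, ← hσeq] at hD
      rcases (hmemF' σ).mp hD with ⟨_, hnf⟩ | ⟨τ, hτ, hfc, xi, hxi, hface⟩
      · exact hnf (isFaceOf_refl σ)
      · have hxiGσ : xi ∈ Gσ := by rw [← Finset.mem_coe, hGσ]; exact hxi
        exact hF17 τ hτ hfc xi hxiGσ (hface.subset hxi.2)
  have hdisj : ∀ v ∈ Pstar, v ∉ Gσ := by
    intro v hv hvGσ
    obtain ⟨xi', hxi'Gσ, hxi'P⟩ := hxiout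
    have hvx : v ≠ x := fun h => hxGσ (h ▸ hvGσ)
    have hD : coneOf (toNR '' ((↑Pstar : Set (Fin d → ℤ)) \ {v})) ∈ F'.cones :=
      hPerase v hv
    have hxD : toNR x ∈ coneOf (toNR '' ((↑Pstar : Set (Fin d → ℤ)) \ {v})) :=
      subset_coneOf _ ⟨x, ⟨hxP, hvx ∘ Eq.symm⟩, rfl⟩
    obtain ⟨τ, hτ, hfc, xi, hxi, hface⟩ := hstar2 _ hD hxD
    have hDτ : coneOf (toNR '' ((↑Pstar : Set (Fin d → ℤ)) \ {v})) ⊆ τ :=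
      hface.subset.trans (hCτ τ hτ hfc xi)
    obtain ⟨GT, hGT, hGTind, hτeq⟩ := F.coneGens_pack hs hτ
    have hστ : σ ⊆ τ := hfc.subset
    have hGσGT : Gσ ⊆ GT := by
      intro w hw
      rw [← Finset.mem_coe, hGT]
      exact ⟨(hGσgen w hw).1, hστ (hGσgen w hw).2⟩
    have hxGT : x ∉ GT := by
      intro h
      have : x ∈ F.coneGens τ := by rw [← hGT]; exact h
      exact hxgen this.1
    have hPsub : Pstar ⊆ insert x (GT.erase xi') := by
      intro w hw
      by_cases hwx : w = x
      · rw [hwx]; exact Finset.mem_insert_self _ _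
      · apply Finset.mem_insert_of_mem
        rw [Finset.mem_erase]
        refine ⟨fun h => hxi'P (h ▸ hw), ?_⟩
        rw [← Finset.mem_coe, hGT]
        refine ⟨(hPF w hw hwx), ?_⟩
        by_cases hwv : w = v
        · rw [hwv]; exact hστ (hGσgen v hvGσ).2
        · exact hDτ (subset_coneOf _ ⟨w, ⟨hw, hwv⟩, rfl⟩)
    have hind2 : IndepL (insert x (GT.erase xi')) :=
      indepL_exchange hGTind hGσGT hxi'Gσ hxGT hcxrep (hcxpos xi' hxi'Gσ).ne'
    have hfaceP := isFaceOf_coneOf_subset hPsub hind2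
    apply hPnc
    rw [hmemF']
    right
    refine ⟨τ, hτ, hfc, xi', (hGσgen xi' hxi'Gσ), ?_⟩
    have hsetid : (insert x ((F.coneGens τ \ F.coneGens σ) ∪ (F.coneGens σ \ {xi'})))
        = (↑(insert x (GT.erase xi')) : Set (Fin d → ℤ)) := by
      rw [Finset.coe_insert, Finset.coe_erase, ← hGT, ← hGσ]
      rw [set_decomp (Finset.coe_subset.mpr hGσGT) hxi'Gσ]
    rw [hsetid]
    exact hfaceP
  -- Claim 1 : the cone on Q ∪ Gσ is not in F
  set R : Finset (Fin d → ℤ) := Q ∪ Gσ with hRdef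
  have hR : coneOf (toNR '' (↑R : Set (Fin d → ℤ))) ∉ F.cones := by
    intro hE
    set E := coneOf (toNR '' (↑R : Set (Fin d → ℤ))) with hEdef
    have hσE : σ ⊆ E := by
      rw [hσeq]
      apply coneOf_mono
      apply Set.image_mono
      intro w hw
      rw [Finset.mem_coe] at hw ⊢
      exact Finset.mem_union_right _ hw
    have hxE : toNR x ∈ E := hσE hxσ'
    have hfcE : IsFaceOf σ E := (hfaceσ E hE hxE).2
    obtain ⟨GE, hGE, hGEind, hEeq⟩ := F.coneGens_pack hs hE
    have hGσGE : Gσ ⊆ GE := by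
      intro w hw
      rw [← Finset.mem_coe, hGE]
      exact ⟨(hGσgen w hw).1, hσE (hGσgen w hw).2⟩
    have hQGE : Q ⊆ GE := by
      intro w hw
      have hwP : w ∈ Pstar := Finset.mem_of_mem_erase hw
      have hwx : w ≠ x := Finset.ne_of_mem_erase hw
      rw [← Finset.mem_coe, hGE]
      refine ⟨hPF w hwP hwx, ?_⟩
      exact subset_coneOf _ (Set.mem_image_of_mem _ (Finset.mem_union_left _ hw))
    have hxGE : x ∉ GE := by
      intro h
      have : x ∈ F.coneGens E := by rw [← hGE]; exact h
      exact hxgen this.1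
    obtain ⟨xi, hxi⟩ := Finset.card_pos.mp (show 0 < Gσ.card by omega)
    have hPsub : Pstar ⊆ insert x (GE.erase xi) := by
      intro w hw
      by_cases hwx : w = x
      · rw [hwx]; exact Finset.mem_insert_self _ _
      · apply Finset.mem_insert_of_mem
        rw [Finset.mem_erase]
        exact ⟨fun h => hdisj w hw (h ▸ hxi), hQGE (Finset.mem_erase.mpr ⟨hwx, hw⟩)⟩
    have hind2 : IndepL (insert x (GE.erase xi)) :=
      indepL_exchange hGEind hGσGE hxi hxGE hcxrep (hcxpos xi hxi).ne'
    have hfaceP := isFaceOf_coneOf_subset hPsub hind2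
    apply hPnc
    rw [hmemF']
    right
    refine ⟨E, hE, hfcE, xi, (hGσgen xi hxi), ?_⟩
    have hsetid : (insert x ((F.coneGens E \ F.coneGens σ) ∪ (F.coneGens σ \ {xi})))
        = (↑(insert x (GE.erase xi)) : Set (Fin d → ℤ)) := by
      rw [Finset.coe_insert, Finset.coe_erase, ← hGE, ← hGσ]
      rw [set_decomp (Finset.coe_subset.mpr hGσGE) hxi]
    rw [hsetid]
    exact hfaceP
  -- Claim 2 : a minimal non-cone subset of R
  set 𝒮 : Finset (Finset (Fin d → ℤ)) :=
    R.powerset.filter (fun A => coneOf (toNR '' (↑A : Set (Fin d → ℤ))) ∉ F.cones)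
    with h𝒮
  have h𝒮ne : 𝒮.Nonempty := by
    refine ⟨R, ?_⟩
    rw [h𝒮, Finset.mem_filter, Finset.mem_powerset]
    exact ⟨Finset.Subset.refl R, hR⟩
  obtain ⟨P, hP𝒮, hPmin⟩ := Finset.exists_min_image 𝒮 Finset.card h𝒮ne
  rw [h𝒮, Finset.mem_filter, Finset.mem_powerset] at hP𝒮
  obtain ⟨hPR, hPnotcone⟩ := hP𝒮
  have hPerase' : ∀ z ∈ P, coneOf (toNR '' (↑(P.erase z) : Set (Fin d → ℤ))) ∈ F.cones := by
    intro z hz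
    by_contra hno
    have hmem : P.erase z ∈ 𝒮 := by
      rw [h𝒮, Finset.mem_filter, Finset.mem_powerset]
      exact ⟨(Finset.erase_subset z P).trans hPR, hno⟩
    have h1 := hPmin _ hmem
    have h2 := Finset.card_erase_lt_of_mem hz
    omega
  -- Claim 3 : Q ⊆ P
  have hQP : Q ⊆ P := by
    by_contra hno
    rw [Finset.not_subset] at hno
    obtain ⟨y, hyQ, hyP⟩ := hno
    have hyPstar : y ∈ Pstar := Finset.mem_of_mem_erase hyQ
    have hyx : y ≠ x := Finset.ne_of_mem_erase hyQ
    have hD : coneOf (toNR '' ((↑Pstar : Set (Fin d → ℤ)) \ {y})) ∈ F'.cones :=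
      hPerase y hyPstar
    have hxD : toNR x ∈ coneOf (toNR '' ((↑Pstar : Set (Fin d → ℤ)) \ {y})) :=
      subset_coneOf _ ⟨x, ⟨hxP, hyx ∘ Eq.symm⟩, rfl⟩
    obtain ⟨τ, hτ, hfc, xi, hxi, hface⟩ := hstar2 _ hD hxD
    have hDτ : coneOf (toNR '' ((↑Pstar : Set (Fin d → ℤ)) \ {y})) ⊆ τ :=
      hface.subset.trans (hCτ τ hτ hfc xi)
    obtain ⟨GT, hGT, hGTind, hτeq⟩ := F.coneGens_pack hs hτ
    have hστ : σ ⊆ τ := hfc.subset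
    have hPGT : P ⊆ GT := by
      intro w hw
      rcases Finset.mem_union.mp (hPR hw) with hwQ | hwGσ
      · have hwP : w ∈ Pstar := Finset.mem_of_mem_erase hwQ
        have hwx : w ≠ x := Finset.ne_of_mem_erase hwQ
        have hwy : w ≠ y := fun h => hyP (h ▸ hw)
        rw [← Finset.mem_coe, hGT]
        exact ⟨hPF w hwP hwx, hDτ (subset_coneOf _ ⟨w, ⟨hwP, hwy⟩, rfl⟩)⟩
      · rw [← Finset.mem_coe, hGT]
        exact ⟨(hGσgen w hwGσ).1, hστ (hGσgen w hwGσ).2⟩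
    exact hPnotcone (F.subcone_mem hτ hGTind hτeq hPGT).2
  -- conclusion
  have hPdiff : P \ Gσ = Q := by
    ext v
    rw [Finset.mem_sdiff]
    constructor
    · rintro ⟨hvP, hvGσ⟩
      rcases Finset.mem_union.mp (hPR hvP) with h | h
      · exact h
      · exact absurd h hvGσ
    · intro hvQ
      exact ⟨hQP hvQ, hdisj v (Finset.mem_of_mem_erase hvQ)⟩
  refine ⟨P, ⟨?_, ?_, hPnotcone, ?_⟩, ?_⟩
  · obtain ⟨y, hy⟩ := hQne
    exact ⟨y, hQP hy⟩
  · intro v hv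
    rw [Finset.mem_coe] at hv
    rcases Finset.mem_union.mp (hPR hv) with h | h
    · exact hPF v (Finset.mem_of_mem_erase h) (Finset.ne_of_mem_erase h)
    · exact (hGσgen v h).1
  · intro z hz
    have : (↑P : Set (Fin d → ℤ)) \ {z} = (↑(P.erase z) : Set (Fin d → ℤ)) := by
      rw [Finset.coe_erase]
    rw [this]
    exact hPerase' z hz
  · rw [hPdiff, hQ]
    exact Finset.insert_erase hxP
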